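/- Let n ≥ 2 and 0 ≤ l ≤ n. Then Tr(F_3 · C_l) = 4·(l-1)·C(n,l) if l is odd, and Tr(F_3 · C_l) = 0 if l is even. -/

import Mathlib

open Finset Matrix

noncomputable section

/-- Hamming weight of a basis label. -/
def hw {n : ℕ} (z : Fin n → Bool) : ℕ := (Finset.univ.filter fun i => z i = true).card

/-- The sign `(-1)^{z i}` of a bit. -/
def sgn (b : Bool) : ℂ := if b = true then -1 else 1

/-- The operator `C_l`: the diagonal matrix with entry
`∑_{S ⊆ Fin n, |S| = l} ∏_{i ∈ S} (-1)^{z i}`. -/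
def Cmat (n l : ℕ) : Matrix (Fin n → Bool) (Fin n → Bool) ℂ :=
  Matrix.diagonal fun z => ∑ S ∈ Finset.powersetCard l (Finset.univ : Finset (Fin n)),
    ∏ i ∈ S, sgn (z i)

/-- The projector `Π_m` onto the Hamming-weight-`m` sector. -/
def Pimat (n m : ℕ) : Matrix (Fin n → Bool) (Fin n → Bool) ℂ :=
  Matrix.diagonal fun z => if hw z = m then 1 else 0

/-- The operator `F_3 = (n-2)(Π_0 - Π_n) - (Π_1 - Π_{n-1})`. -/
def F3mat (n : ℕ) : Matrix (Fin n → Bool) (Fin n → Bool) ℂ :=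
  ((n : ℂ) - 2) • (Pimat n 0 - Pimat n n) - (Pimat n 1 - Pimat n (n-1))

namespace Stmt5Aux

/-- The diagonal entry of `C_l`. -/
def cs (n l : ℕ) (z : Fin n → Bool) : ℂ :=
  ∑ S ∈ Finset.powersetCard l (Finset.univ : Finset (Fin n)), ∏ i ∈ S, sgn (z i)

lemma trace_Pi_C (n m l : ℕ) :
    Matrix.trace (Pimat n m * Cmat n l)
      = ∑ z ∈ Finset.univ.filter (fun z : Fin n → Bool => hw z = m), cs n l z := by
  rw [Pimat, Cmat, Matrix.diagonal_mul_diagonal, Matrix.trace_diagonal, Finset.sum_filter]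
  refine Finset.sum_congr rfl fun z _ => ?_
  by_cases h : hw z = m <;> simp [h, cs]

lemma filter_hw_zero (n : ℕ) :
    Finset.univ.filter (fun z : Fin n → Bool => hw z = 0)
      = {fun _ => false} := by
  ext z
  simp only [Finset.mem_filter, Finset.mem_univ, true_and, Finset.mem_singleton]
  rw [hw, Finset.card_eq_zero, Finset.filter_eq_empty_iff]
  constructor
  · intro h
    funext i
    have := h (Finset.mem_univ i)
    simpa using this
  · intro h i _
    simp [h]

lemma filter_hw_n (n : ℕ) :
    Finset.univ.filter (fun z : Fin n → Bool => hw z = n)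
      = {fun _ => true} := by
  ext z
  simp only [Finset.mem_filter, Finset.mem_univ, true_and, Finset.mem_singleton]
  constructor
  · intro h
    have hu : (Finset.univ.filter fun i => z i = true) = Finset.univ := by
      apply Finset.eq_univ_of_card
      simpa [hw] using h
    funext i
    have hi : i ∈ Finset.univ.filter fun i => z i = true := by
      rw [hu]; exact Finset.mem_univ i
    exact (Finset.mem_filter.mp hi).2
  · intro h
    subst h
    simp [hw]

lemma hw_eq_one_iff (n : ℕ) (z : Fin n → Bool) :
    hw z = 1 ↔ ∃ j, z = fun i => decide (i = j) := by
  constructor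
  · intro h
    obtain ⟨j, hj⟩ := Finset.card_eq_one.mp h
    have hmem : ∀ i : Fin n, z i = true ↔ i = j := by
      intro i
      constructor
      · intro hi
        have hmem' : i ∈ Finset.univ.filter fun i => z i = true :=
          Finset.mem_filter.mpr ⟨Finset.mem_univ i, hi⟩
        rw [hj] at hmem'
        exact Finset.mem_singleton.mp hmem'
      · intro hij
        have hj' : i ∈ Finset.univ.filter fun k => z k = true := by
          rw [hj, Finset.mem_singleton]; exact hij
        exact (Finset.mem_filter.mp hj').2
    refine ⟨j, funext fun i => ?_⟩
    rw [Bool.eq_iff_iff, decide_eq_true_iff]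
    exact hmem i
  · rintro ⟨j, rfl⟩
    simp [hw, Finset.filter_eq']

lemma hw_eq_pred_iff (n : ℕ) (hn : 1 ≤ n) (z : Fin n → Bool) :
    hw z = n - 1 ↔ ∃ j, z = fun i => !decide (i = j) := by
  constructor
  · intro h
    have hsum := Finset.card_filter_add_card_filter_not
      (s := (Finset.univ : Finset (Fin n))) (p := fun i => z i = true)
    have hcard : (Finset.univ.filter fun i => ¬ z i = true).card = 1 := by
      have hz : hw z + (Finset.univ.filter fun i => ¬ z i = true).card = n := by
        simpa [hw] using hsum
      omega
    obtain ⟨j, hj⟩ := Finset.card_eq_one.mp hcard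
    have hmem : ∀ i : Fin n, ¬ z i = true ↔ i = j := by
      intro i
      constructor
      · intro hi
        have hmem' : i ∈ Finset.univ.filter fun i => ¬ z i = true :=
          Finset.mem_filter.mpr ⟨Finset.mem_univ i, hi⟩
        rw [hj] at hmem'
        exact Finset.mem_singleton.mp hmem'
      · intro hij
        have hj' : i ∈ Finset.univ.filter fun k => ¬ z k = true := by
          rw [hj, Finset.mem_singleton]; exact hij
        exact (Finset.mem_filter.mp hj').2
    refine ⟨j, funext fun i => ?_⟩
    rw [Bool.eq_iff_iff]
    simp only [Bool.not_eq_true', decide_eq_false_iff_not]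
    have h2 := hmem i
    tauto
  · rintro ⟨j, rfl⟩
    have he : (Finset.univ.filter fun i : Fin n => (!decide (i = j)) = true)
        = Finset.univ.erase j := by
      ext i
      simp [Finset.mem_erase]
    rw [hw, he, Finset.card_erase_of_mem (Finset.mem_univ j)]
    simp

lemma cs_false (n l : ℕ) : cs n l (fun _ => false) = (n.choose l : ℂ) := by
  simp [cs, sgn]

lemma cs_true (n l : ℕ) : cs n l (fun _ => true) = (-1)^l * (n.choose l : ℂ) := by
  have h : ∀ S ∈ Finset.powersetCard l (Finset.univ : Finset (Fin n)),
      (∏ _i ∈ S, sgn true) = (-1 : ℂ)^l := by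
    intro S hS
    rw [Finset.prod_const, (Finset.mem_powersetCard.mp hS).2]
    simp [sgn]
  rw [cs, Finset.sum_congr rfl h, Finset.sum_const, Finset.card_powersetCard,
    nsmul_eq_mul, mul_comm]
  simp

lemma prod_sgn_e {n : ℕ} (j : Fin n) (S : Finset (Fin n)) :
    ∏ i ∈ S, sgn (decide (i = j)) = if j ∈ S then (-1:ℂ) else 1 := by
  rw [← Finset.prod_ite_eq' S j (fun _ => (-1:ℂ))]
  refine Finset.prod_congr rfl fun i _ => ?_
  by_cases h : i = j <;> simp [sgn, h]

lemma sum_ite_mem_univ {n : ℕ} (S : Finset (Fin n)) :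
    ∑ j : Fin n, (if j ∈ S then (-1:ℂ) else 1) = (n : ℂ) - 2 * S.card := by
  have h : ∀ j : Fin n, (if j ∈ S then (-1:ℂ) else 1)
      = 1 - 2 * (if j ∈ S then (1:ℂ) else 0) := by
    intro j; split <;> ring
  rw [Finset.sum_congr rfl (fun j _ => h j), Finset.sum_sub_distrib, Finset.sum_const,
    ← Finset.mul_sum, Finset.sum_ite_mem, Finset.univ_inter, Finset.sum_const]
  simp [Finset.card_univ]

lemma sum_cs_e (n l : ℕ) :
    ∑ j : Fin n, cs n l (fun i => decide (i = j))
      = ((n:ℂ) - 2*l) * (n.choose l : ℂ) := by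
  unfold cs
  rw [Finset.sum_comm]
  have h : ∀ S ∈ Finset.powersetCard l (Finset.univ : Finset (Fin n)),
      (∑ j : Fin n, ∏ i ∈ S, sgn (decide (i = j))) = (n:ℂ) - 2*l := by
    intro S hS
    have hc := (Finset.mem_powersetCard.mp hS).2
    calc (∑ j : Fin n, ∏ i ∈ S, sgn (decide (i = j)))
        = ∑ j : Fin n, (if j ∈ S then (-1:ℂ) else 1) :=
          Finset.sum_congr rfl fun j _ => prod_sgn_e j S
      _ = (n:ℂ) - 2*S.card := sum_ite_mem_univ S
      _ = (n:ℂ) - 2*l := by rw [hc]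
  rw [Finset.sum_congr rfl h, Finset.sum_const, Finset.card_powersetCard,
    nsmul_eq_mul, mul_comm]
  simp

lemma prod_sgn_e' {n : ℕ} (j : Fin n) (S : Finset (Fin n)) :
    ∏ i ∈ S, sgn (!decide (i = j))
      = (-1:ℂ)^S.card * (if j ∈ S then (-1:ℂ) else 1) := by
  have h : ∀ i ∈ S, sgn (!decide (i = j)) = (-1) * (if i = j then (-1:ℂ) else 1) := by
    intro i _; by_cases h : i = j <;> simp [sgn, h]
  rw [Finset.prod_congr rfl h, Finset.prod_mul_distrib, Finset.prod_const,
    Finset.prod_ite_eq' S j (fun _ => (-1:ℂ))]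

lemma sum_cs_e' (n l : ℕ) :
    ∑ j : Fin n, cs n l (fun i => !decide (i = j))
      = (-1)^l * (((n:ℂ) - 2*l) * (n.choose l : ℂ)) := by
  unfold cs
  rw [Finset.sum_comm]
  have h : ∀ S ∈ Finset.powersetCard l (Finset.univ : Finset (Fin n)),
      (∑ j : Fin n, ∏ i ∈ S, sgn (!decide (i = j))) = (-1:ℂ)^l * ((n:ℂ) - 2*l) := by
    intro S hS
    have hc := (Finset.mem_powersetCard.mp hS).2
    calc (∑ j : Fin n, ∏ i ∈ S, sgn (!decide (i = j)))
        = ∑ j : Fin n, (-1:ℂ)^S.card * (if j ∈ S then (-1:ℂ) else 1) :=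
          Finset.sum_congr rfl fun j _ => prod_sgn_e' j S
      _ = (-1:ℂ)^S.card * ∑ j : Fin n, (if j ∈ S then (-1:ℂ) else 1) := by
          rw [Finset.mul_sum]
      _ = (-1:ℂ)^l * ((n:ℂ) - 2*l) := by rw [sum_ite_mem_univ S, hc]
  rw [Finset.sum_congr rfl h, Finset.sum_const, Finset.card_powersetCard,
    nsmul_eq_mul]
  simp; ring

end Stmt5Aux

/-- `Tr(F_3 C_l) = 4(l-1)C(n,l)` for odd `l`, and `0` for even `l`. -/
theorem stmt5 (n l : ℕ) (hn : 2 ≤ n) (hl : l ≤ n) :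
    Matrix.trace (F3mat n * Cmat n l)
      = if Odd l then 4 * ((l : ℂ) - 1) * (Nat.choose n l : ℂ) else 0 := by
  have h1n : (1:ℕ) ≤ n := by omega
  have hf1 : Finset.univ.filter (fun z : Fin n → Bool => hw z = 1)
      = Finset.image (fun j : Fin n => fun i => decide (i = j)) Finset.univ := by
    ext z
    simp only [Finset.mem_filter, Finset.mem_univ, true_and, Finset.mem_image,
      Stmt5Aux.hw_eq_one_iff]
    constructor
    · rintro ⟨j, hj⟩; exact ⟨j, hj.symm⟩
    · rintro ⟨j, hj⟩; exact ⟨j, hj.symm⟩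
  have hf2 : Finset.univ.filter (fun z : Fin n → Bool => hw z = n - 1)
      = Finset.image (fun j : Fin n => fun i => !decide (i = j)) Finset.univ := by
    ext z
    simp only [Finset.mem_filter, Finset.mem_univ, true_and, Finset.mem_image,
      Stmt5Aux.hw_eq_pred_iff n h1n]
    constructor
    · rintro ⟨j, hj⟩; exact ⟨j, hj.symm⟩
    · rintro ⟨j, hj⟩; exact ⟨j, hj.symm⟩
  have hinj1 : ∀ a ∈ (Finset.univ : Finset (Fin n)), ∀ b ∈ Finset.univ,
      (fun i : Fin n => decide (i = a)) = (fun i => decide (i = b)) → a = b := by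
    intro a _ b _ hab
    simpa using congrFun hab a
  have hinj2 : ∀ a ∈ (Finset.univ : Finset (Fin n)), ∀ b ∈ Finset.univ,
      (fun i : Fin n => !decide (i = a)) = (fun i => !decide (i = b)) → a = b := by
    intro a _ b _ hab
    simpa using congrFun hab a
  have t0 : Matrix.trace (Pimat n 0 * Cmat n l) = (n.choose l : ℂ) := by
    rw [Stmt5Aux.trace_Pi_C, Stmt5Aux.filter_hw_zero, Finset.sum_singleton,
      Stmt5Aux.cs_false]
  have tn : Matrix.trace (Pimat n n * Cmat n l) = (-1)^l * (n.choose l : ℂ) := by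
    rw [Stmt5Aux.trace_Pi_C, Stmt5Aux.filter_hw_n, Finset.sum_singleton,
      Stmt5Aux.cs_true]
  have t1 : Matrix.trace (Pimat n 1 * Cmat n l)
      = ((n:ℂ) - 2*l) * (n.choose l : ℂ) := by
    rw [Stmt5Aux.trace_Pi_C, hf1, Finset.sum_image hinj1, Stmt5Aux.sum_cs_e]
  have t2 : Matrix.trace (Pimat n (n-1) * Cmat n l)
      = (-1)^l * (((n:ℂ) - 2*l) * (n.choose l : ℂ)) := by
    rw [Stmt5Aux.trace_Pi_C, hf2, Finset.sum_image hinj2, Stmt5Aux.sum_cs_e']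
  rw [F3mat, sub_mul, smul_mul_assoc, sub_mul, sub_mul, Matrix.trace_sub,
    Matrix.trace_smul, Matrix.trace_sub, Matrix.trace_sub, t0, tn, t1, t2,
    smul_eq_mul]
  rcases Nat.even_or_odd l with he | ho
  · rw [if_neg (Nat.not_odd_iff_even.mpr he), he.neg_one_pow]
    ring
  · rw [if_pos ho, ho.neg_one_pow]
    ring
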